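/- arXiv:1806.05739 — 3 statements merged into one kernel-verified Lean document; each statement's English description precedes it below -/
import Mathlib

section
/- Let k be a real number, let c be a nonzero real number satisfying c² − kc − 1 = 0, and let x₁, x₂ be real numbers with x₁ + x₂ ≠ 0 and (1 − x₁x₂)/(x₁ + x₂) = c. With the sequences (aₙ), (bₙ), (Aₙ), (Bₙ) defined by a₁ = 0, b₁ = 1, aₙ = bₙ₋₁, bₙ = aₙ₋₁ + k·bₙ₋₁ for n ≥ 2, and A₁ = −k, B₁ = 1, Aₙ = Bₙ₋₁ − k·Aₙ₋₁, Bₙ = Aₙ₋₁ for n ≥ 2, one has for every n ≥ 2: ((1 − x₁x₂)/(x₁ + x₂))ⁿ = aₙ + bₙ·((1 − x₁x₂)/(x₁ + x₂)) and ((x₁ + x₂)/(1 − x₁x₂))ⁿ = Aₙ + Bₙ·((1 − x₁x₂)/(x₁ + x₂)). -/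
theorem stmt_10 (k c x₁ x₂ : ℝ) (hc : c ≠ 0) (hq : c ^ 2 - k * c - 1 = 0)
    (hx : x₁ + x₂ ≠ 0) (h : (1 - x₁ * x₂) / (x₁ + x₂) = c)
    (a b A B : ℕ → ℝ)
    (ha1 : a 1 = 0) (hb1 : b 1 = 1)
    (ha : ∀ n ≥ 2, a n = b (n - 1)) (hb : ∀ n ≥ 2, b n = a (n - 1) + k * b (n - 1))
    (hA1 : A 1 = -k) (hB1 : B 1 = 1)
    (hA : ∀ n ≥ 2, A n = B (n - 1) - k * A (n - 1)) (hB : ∀ n ≥ 2, B n = A (n - 1)) :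
    ∀ n ≥ 2,
      ((1 - x₁ * x₂) / (x₁ + x₂)) ^ n = a n + b n * ((1 - x₁ * x₂) / (x₁ + x₂)) ∧
      ((x₁ + x₂) / (1 - x₁ * x₂)) ^ n = A n + B n * ((1 - x₁ * x₂) / (x₁ + x₂)) := by
  have hnum : 1 - x₁ * x₂ = c * (x₁ + x₂) := by
    field_simp at h; linarith
  have hinv : (x₁ + x₂) / (1 - x₁ * x₂) = c - k := by
    rw [hnum, mul_comm, ← div_div, div_self hx, eq_comm, eq_div_iff hc]
    linear_combination hq
  rw [h, hinv]
  intro n hn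
  induction n, hn using Nat.le_induction with
  | base =>
    constructor
    · rw [ha 2 le_rfl, hb 2 le_rfl]
      simp [ha1, hb1]
      linear_combination hq
    · rw [hA 2 le_rfl, hB 2 le_rfl]
      simp [hA1, hB1]
      linear_combination hq
  | succ n hn ih =>
    obtain ⟨ih1, ih2⟩ := ih
    have h2 : n + 1 ≥ 2 := by omega
    have hs : n + 1 - 1 = n := by omega
    constructor
    · rw [pow_succ, ih1, ha (n+1) h2, hb (n+1) h2, hs]
      linear_combination (b n) * hq
    · rw [pow_succ, ih2, hA (n+1) h2, hB (n+1) h2, hs]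
      linear_combination (B n) * hq
end

section
/- Let φ = (1 + √5)/2 and set t = (√(φ¹⁰ + 1) − φ⁵)^{1/5}. Then (1 − φ·t)/(φ + t) = √5/(1 + (5^{3/4}·((√5 − 1)/2)^{5/2} − 1)^{1/5}) − (√5 + 1)/2. -/
theorem stmt_17 (φ t : ℝ) (hφ : φ = (1 + Real.sqrt 5) / 2)
    (ht : t = (Real.sqrt (φ ^ 10 + 1) - φ ^ 5) ^ ((1 : ℝ) / 5)) :
    (1 - φ * t) / (φ + t) =
      Real.sqrt 5 /
        (1 + ((5 : ℝ) ^ ((3 : ℝ) / 4) *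
            ((Real.sqrt 5 - 1) / 2) ^ ((5 : ℝ) / 2) - 1) ^ ((1 : ℝ) / 5)) -
      (Real.sqrt 5 + 1) / 2 := by
  have h2 : Real.sqrt 5 ^ 2 = 5 := Real.sq_sqrt (by norm_num)
  have hs0 : (0:ℝ) ≤ Real.sqrt 5 := Real.sqrt_nonneg 5
  set s := Real.sqrt 5 with hsdef
  have hs1 : (2:ℝ) < s := by nlinarith
  have hφ0 : (0:ℝ) < φ := by rw [hφ]; nlinarith
  set ψ : ℝ := (s - 1) / 2 with hψ
  have hψ0 : (0:ℝ) ≤ ψ := by rw [hψ]; linarith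
  have hinv : φ * ψ = 1 := by rw [hφ, hψ]; linear_combination h2 / 4
  have key : φ ^ 10 + 1 = 5 * s * φ ^ 5 := by
    rw [hφ]
    linear_combination ((s^8 + 10*s^7 + 50*s^6 + 170*s^5 + 300*s^4 + 302*s^3 +
      110*s^2 + 30*s - 205) / 1024) * h2
  have h54 : ((5:ℝ) ^ ((3:ℝ)/4)) ^ 2 = 5 * s := by
    rw [← Real.rpow_natCast ((5:ℝ) ^ ((3:ℝ)/4)) 2, ← Real.rpow_mul (by norm_num : (0:ℝ) ≤ 5)]
    rw [show (3:ℝ)/4 * (2:ℕ) = 1 + 1/2 by push_cast; norm_num,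
      Real.rpow_add (by norm_num : (0:ℝ) < 5), Real.rpow_one, hsdef, Real.sqrt_eq_rpow]
  have hψ52 : (ψ ^ ((5:ℝ)/2)) ^ 2 = ψ ^ 5 := by
    rw [← Real.rpow_natCast (ψ ^ ((5:ℝ)/2)) 2, ← Real.rpow_mul hψ0]
    rw [show (5:ℝ)/2 * (2:ℕ) = ((5:ℕ):ℝ) by push_cast; norm_num, Real.rpow_natCast]
  have hA0 : (0:ℝ) ≤ (5:ℝ) ^ ((3:ℝ)/4) * ψ ^ ((5:ℝ)/2) :=
    mul_nonneg (Real.rpow_nonneg (by norm_num) _) (Real.rpow_nonneg hψ0 _)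
  have hsq : Real.sqrt (5 * s * ψ ^ 5) = (5:ℝ) ^ ((3:ℝ)/4) * ψ ^ ((5:ℝ)/2) := by
    rw [show 5 * s * ψ ^ 5 = ((5:ℝ) ^ ((3:ℝ)/4) * ψ ^ ((5:ℝ)/2)) ^ 2 by
      rw [mul_pow, h54, hψ52]]
    exact Real.sqrt_sq hA0
  have hψ5 : φ ^ 5 * ψ ^ 5 = 1 := by
    linear_combination (φ^4*ψ^4 + φ^3*ψ^3 + φ^2*ψ^2 + φ*ψ + 1) * hinv
  have hT : Real.sqrt (φ ^ 10 + 1) = φ ^ 5 * Real.sqrt (5 * s * ψ ^ 5) := by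
    rw [key, show 5 * s * φ ^ 5 = (φ ^ 5) ^ 2 * (5 * s * ψ ^ 5) by
      linear_combination (-(5*s*φ^5)) * hψ5]
    rw [Real.sqrt_mul (sq_nonneg _), Real.sqrt_sq (pow_nonneg hφ0.le 5)]
  have h1le : (1:ℝ) ≤ 5 * s * ψ ^ 5 := by
    have h55 : 55 * s ≤ 123 := by nlinarith
    have heq : 5 * s * ψ ^ 5 = (125 - 55 * s) / 2 := by
      rw [hψ]
      linear_combination (5*s^4/32 - 25*s^3/32 + 75*s^2/32 - 175*s/32 + 25/2) * h2
    rw [heq]; linarith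
  have hS0 : (0:ℝ) ≤ (5:ℝ) ^ ((3:ℝ)/4) * ψ ^ ((5:ℝ)/2) - 1 := by
    rw [← hsq]
    have := Real.sqrt_le_sqrt h1le
    rw [Real.sqrt_one] at this
    linarith
  have ht' : t = φ * ((5:ℝ) ^ ((3:ℝ)/4) * ψ ^ ((5:ℝ)/2) - 1) ^ ((1:ℝ)/5) := by
    rw [ht, hT, hsq, show φ ^ 5 * ((5:ℝ) ^ ((3:ℝ)/4) * ψ ^ ((5:ℝ)/2)) - φ ^ 5
        = φ ^ 5 * ((5:ℝ) ^ ((3:ℝ)/4) * ψ ^ ((5:ℝ)/2) - 1) by ring,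
      Real.mul_rpow (pow_nonneg hφ0.le 5) hS0]
    congr 1
    rw [← Real.rpow_natCast φ 5, ← Real.rpow_mul hφ0.le]
    norm_num
  set u : ℝ := ((5:ℝ) ^ ((3:ℝ)/4) * ψ ^ ((5:ℝ)/2) - 1) ^ ((1:ℝ)/5) with hu
  have hu0 : (0:ℝ) ≤ u := Real.rpow_nonneg hS0 _
  have h1u : (0:ℝ) < 1 + u := by linarith
  rw [ht', hφ]
  have hd : ((1 + s)/2 + (1 + s)/2 * u) ≠ 0 := by positivity
  field_simp
  ring_nf
  nlinarith [h2, sq_nonneg u]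
end

section
/- Let k be an integer and let r, x₁, x₂ be real numbers with x₁ + x₂ = 2r, x₁ + x₂ ≠ 0, and (2^k − x₁x₂)/(x₁ + x₂) = 1. Then r² + 2r − 2^k ≥ 0, both x₁ and x₂ are roots of x² − 2rx − (2r − 2^k) = 0, and {x₁, x₂} = {r + √(r² + 2r − 2^k), r − √(r² + 2r − 2^k)}. Moreover, if additionally 0 < r ≤ 2^{k−1}, then both roots lie in the interval [0, 2^k], and the two roots are equal if and only if r = √(2^k + 1) − 1. -/
theorem stmt_19 (k : ℤ) (r x₁ x₂ : ℝ) (hr : x₁ + x₂ = 2 * r) (hx : x₁ + x₂ ≠ 0)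
    (h : ((2 : ℝ) ^ k - x₁ * x₂) / (x₁ + x₂) = 1) :
    r ^ 2 + 2 * r - (2 : ℝ) ^ k ≥ 0 ∧
    x₁ ^ 2 - 2 * r * x₁ - (2 * r - (2 : ℝ) ^ k) = 0 ∧
    x₂ ^ 2 - 2 * r * x₂ - (2 * r - (2 : ℝ) ^ k) = 0 ∧
    ({x₁, x₂} : Set ℝ) =
      {r + Real.sqrt (r ^ 2 + 2 * r - (2 : ℝ) ^ k),
       r - Real.sqrt (r ^ 2 + 2 * r - (2 : ℝ) ^ k)} ∧
    (0 < r → r ≤ (2 : ℝ) ^ (k - 1) →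
      (0 ≤ r - Real.sqrt (r ^ 2 + 2 * r - (2 : ℝ) ^ k) ∧
        r + Real.sqrt (r ^ 2 + 2 * r - (2 : ℝ) ^ k) ≤ (2 : ℝ) ^ k) ∧
      (r + Real.sqrt (r ^ 2 + 2 * r - (2 : ℝ) ^ k) =
          r - Real.sqrt (r ^ 2 + 2 * r - (2 : ℝ) ^ k) ↔
        r = Real.sqrt ((2 : ℝ) ^ k + 1) - 1)) := by
  have hP : (0:ℝ) < (2:ℝ)^k := zpow_pos (by norm_num) k
  have hprod : x₁ * x₂ = (2:ℝ)^k - 2*r := by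
    have h' := (div_eq_one_iff_eq hx).mp h
    linarith [h', hr]
  set D := r ^ 2 + 2 * r - (2 : ℝ) ^ k with hD
  set s := Real.sqrt D with hsdef
  have hD0 : D ≥ 0 := by nlinarith [sq_nonneg (x₁ - x₂)]
  have hs : s ^ 2 = D := Real.sq_sqrt hD0
  have hsn : 0 ≤ s := Real.sqrt_nonneg D
  have h1 : x₁ ^ 2 - 2 * r * x₁ - (2 * r - (2:ℝ)^k) = 0 := by
    linear_combination x₁ * hr - hprod
  have h2 : x₂ ^ 2 - 2 * r * x₂ - (2 * r - (2:ℝ)^k) = 0 := by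
    linear_combination x₂ * hr - hprod
  have hx2 : x₂ = 2*r - x₁ := by linarith
  have hset : ({x₁, x₂} : Set ℝ) = {r + s, r - s} := by
    have hsq : (x₁ - r)^2 = s^2 := by rw [hs, hD]; linear_combination h1
    rcases sq_eq_sq_iff_eq_or_eq_neg.mp hsq with hc | hc
    · have e1 : x₁ = r + s := by linarith
      have e2 : x₂ = r - s := by linarith
      rw [e1, e2]
    · have e1 : x₁ = r - s := by linarith
      have e2 : x₂ = r + s := by linarith
      rw [e1, e2, Set.pair_comm]
  refine ⟨hD0, h1, h2, hset, fun hr0 hr1 => ?_⟩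
  have hkk : (2:ℝ)^k = (2:ℝ)^(k-1) * 2 := by
    rw [← zpow_add_one₀ (two_ne_zero) (k-1)]; ring_nf
  have h2r : 2*r ≤ (2:ℝ)^k := by rw [hkk]; linarith
  have hsler : s ≤ r := by
    rw [hsdef, show r = Real.sqrt (r^2) from (Real.sqrt_sq hr0.le).symm]
    exact Real.sqrt_le_sqrt (by nlinarith)
  have hup : r + s ≤ (2:ℝ)^k := by
    have h3 : s ≤ (2:ℝ)^k - r := by
      rw [hsdef, show (2:ℝ)^k - r = Real.sqrt (((2:ℝ)^k - r)^2) from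
        (Real.sqrt_sq (by linarith)).symm]
      refine Real.sqrt_le_sqrt ?_
      nlinarith [mul_le_mul_of_nonneg_left h2r hP.le]
    linarith
  refine ⟨⟨by linarith, hup⟩, ?_⟩
  constructor
  · intro he
    have hs0 : s = 0 := by linarith
    have hD00 : D = 0 := by rw [← hs, hs0]; ring
    rw [hD] at hD00
    have hsq : (r+1)^2 = (2:ℝ)^k + 1 := by nlinarith [hD00]
    have : Real.sqrt ((2:ℝ)^k + 1) = r + 1 := by
      rw [← hsq, Real.sqrt_sq (by linarith)]
    linarith
  · intro he
    have hr1' : r + 1 = Real.sqrt ((2:ℝ)^k + 1) := by linarith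
    have hsq : (r+1)^2 = (2:ℝ)^k + 1 := by
      rw [hr1', Real.sq_sqrt (by linarith)]
    have hD00 : D = 0 := by rw [hD]; nlinarith
    have hs0 : s = 0 := by rw [hsdef, hD00, Real.sqrt_zero]
    rw [hs0]; ring
end
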